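/- The sequence v(n) = ∑_{k=0}^{n+1} (n+2-k) / ((n+1) · k!) converges to e as n → ∞. -/

import Mathlib

open Filter Finset

lemma aux_sum (m : ℕ) : ∑ k ∈ Finset.range (m + 1), ((1 : ℝ) - k) / (Nat.factorial k) = 1 / (Nat.factorial m) := by
  induction m with
  | zero => simp
  | succ m ih =>
    rw [Finset.sum_range_succ, ih]
    have h1 : (Nat.factorial m : ℝ) ≠ 0 := Nat.cast_ne_zero.2 (Nat.factorial_ne_zero m)
    have h2 : (Nat.factorial (m+1) : ℝ) ≠ 0 := Nat.cast_ne_zero.2 (Nat.factorial_ne_zero _)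
    rw [Nat.factorial_succ] at h2 ⊢
    push_cast
    field_simp
    ring

theorem stmt11 :
    Filter.Tendsto (fun n : ℕ =>
      ∑ k ∈ Finset.range (n + 2), ((n : ℝ) + 2 - (k : ℝ)) /
        (((n : ℝ) + 1) * (Nat.factorial k : ℝ)))
      Filter.atTop (nhds (Real.exp 1)) := by
  have key : ∀ n : ℕ, ∑ k ∈ Finset.range (n + 2), ((n : ℝ) + 2 - (k : ℝ)) /
        (((n : ℝ) + 1) * (Nat.factorial k : ℝ))
      = (∑ k ∈ Finset.range (n + 2), 1 / (Nat.factorial k : ℝ))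
        + (1 / (Nat.factorial (n+1) : ℝ)) / ((n : ℝ) + 1) := by
    intro n
    have hn : ((n : ℝ) + 1) ≠ 0 := by positivity
    have : ∀ k ∈ Finset.range (n+2), ((n : ℝ) + 2 - (k : ℝ)) /
        (((n : ℝ) + 1) * (Nat.factorial k : ℝ))
        = 1 / (Nat.factorial k : ℝ) + (((1:ℝ) - k) / (Nat.factorial k : ℝ)) / ((n:ℝ)+1) := by
      intro k _
      have hk : (Nat.factorial k : ℝ) ≠ 0 := Nat.cast_ne_zero.2 (Nat.factorial_ne_zero k)
      field_simp
      ring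
    rw [Finset.sum_congr rfl this, Finset.sum_add_distrib, ← Finset.sum_div, aux_sum (n+1)]
  simp only [key]
  have h1 : Filter.Tendsto (fun n : ℕ => ∑ k ∈ Finset.range (n + 2), 1 / (Nat.factorial k : ℝ))
      Filter.atTop (nhds (Real.exp 1)) := by
    have hs : HasSum (fun k : ℕ => 1 / (Nat.factorial k : ℝ)) (Real.exp 1) := by
      have := NormedSpace.expSeries_div_hasSum_exp (1 : ℝ)
      simpa [Real.exp_eq_exp_ℝ] using this
    have := hs.tendsto_sum_nat
    exact this.comp (tendsto_add_atTop_nat 2)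
  have h2 : Filter.Tendsto (fun n : ℕ => (1 / (Nat.factorial (n+1) : ℝ)) / ((n : ℝ) + 1))
      Filter.atTop (nhds 0) := by
    apply squeeze_zero (fun n => by positivity) (g := fun n : ℕ => 1 / ((n : ℝ) + 1))
    · intro n
      have hn : (0:ℝ) < (n : ℝ) + 1 := by positivity
      have hf : (1:ℝ) ≤ (Nat.factorial (n+1) : ℝ) := by
        exact_mod_cast Nat.one_le_iff_ne_zero.2 (Nat.factorial_ne_zero _)
      rw [div_div]
      apply div_le_div_of_nonneg_left one_pos.le (by positivity)
      nlinarith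
    · exact tendsto_one_div_add_atTop_nhds_zero_nat
  simpa using h1.add h2
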